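/- Let X be a real vector space of dimension at least 2 endowed with two norms ‖·‖₁ and ‖·‖₂, with associated functionals ρ*,₁ and ρ*,₂. The following conditions are equivalent: (i) ρ*,₁(x,y)/‖x‖₁⁴ = ρ*,₂(x,y)/‖x‖₂⁴ for all x ≠ 0 and all y; (ii) there exist m, M > 0 such that m·|ρ*,₁(x,y)| ≤ |ρ*,₂(x,y)| ≤ M·|ρ*,₁(x,y)| for all x,y; (iii) there exists M > 0 such that |ρ*,₂(x,y)| ≤ M·|ρ*,₁(x,y)| for all x,y; (iv) there exists m > 0 such that m·|ρ*,₁(x,y)| ≤ |ρ*,₂(x,y)| for all x,y; (v) there exist m, M ∈ ℝ such that m·ρ*,₁(x,y) ≤ ρ*,₂(x,y) ≤ M·ρ*,₁(x,y) for all x,y; (vi) there exists M > 0 such that |ρ*,₂(x,y)| = M·|ρ*,₁(x,y)| for all x,y; (vii) there exists M > 0 such that ρ*,₂(x,y) = M·ρ*,₁(x,y) for all x,y; (viii) there exists M > 0 such that ‖x‖₂ = M·‖x‖₁ for all x ∈ X. -/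

import Mathlib

open Filter Topology

/-- `N : X → ℝ` is a norm on the real vector space `X`. -/
def IsNorm {X : Type*} [AddCommGroup X] [Module ℝ X] (N : X → ℝ) : Prop :=
  (∀ x : X, N x = 0 ↔ x = 0) ∧
  (∀ (t : ℝ) (x : X), N (t • x) = |t| * N x) ∧
  (∀ x y : X, N (x + y) ≤ N x + N y)

/-- The norm derivative `ρ₊` computed with respect to the norm `N`. -/
noncomputable def rhoPlusN {X : Type*} [AddCommGroup X] [Module ℝ X] (N : X → ℝ)
    (x y : X) : ℝ :=
  limUnder (𝓝[>] (0 : ℝ)) (fun t : ℝ => (N (x + t • y) ^ 2 - N x ^ 2) / (2 * t))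

/-- The norm derivative `ρ₋` computed with respect to the norm `N`. -/
noncomputable def rhoMinusN {X : Type*} [AddCommGroup X] [Module ℝ X] (N : X → ℝ)
    (x y : X) : ℝ :=
  limUnder (𝓝[<] (0 : ℝ)) (fun t : ℝ => (N (x + t • y) ^ 2 - N x ^ 2) / (2 * t))

/-- `ρ*` computed with respect to the norm `N`. -/
noncomputable def rhoStarN {X : Type*} [AddCommGroup X] [Module ℝ X] (N : X → ℝ)
    (x y : X) : ℝ :=
  rhoMinusN N x y * rhoPlusN N x y

namespace RhoAux

open Set

variable {X : Type*} [AddCommGroup X] [Module ℝ X] {N N₁ N₂ : X → ℝ}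

theorem nzero (hN : IsNorm N) : N 0 = 0 := (hN.1 0).2 rfl

theorem nneg (hN : IsNorm N) (x : X) : N (-x) = N x := by
  have := hN.2.1 (-1) x; simpa using this

theorem nnonneg (hN : IsNorm N) (x : X) : 0 ≤ N x := by
  have h := hN.2.2 x (-x)
  rw [add_neg_cancel, nzero hN, nneg hN] at h; linarith

theorem npos (hN : IsNorm N) {x : X} (hx : x ≠ 0) : 0 < N x :=
  lt_of_le_of_ne (nnonneg hN x) (fun h => hx ((hN.1 x).1 h.symm))

theorem nsmul_nonneg (hN : IsNorm N) {t : ℝ} (ht : 0 ≤ t) (x : X) :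
    N (t • x) = t * N x := by rw [hN.2.1, abs_of_nonneg ht]

theorem nconvexOn (hN : IsNorm N) (x y : X) :
    ConvexOn ℝ Set.univ (fun t : ℝ => N (x + t • y)) := by
  refine ⟨convex_univ, fun s _ u _ a b ha hb hab => ?_⟩
  have key : x + (a • s + b • u) • y = a • (x + s • y) + b • (x + u • y) := by
    have hx : x = (a + b) • x := by rw [hab, one_smul]
    rw [smul_add, smul_add]
    nth_rewrite 1 [hx]
    rw [add_smul, add_smul, smul_smul, smul_smul]
    abel
  calc N (x + (a • s + b • u) • y) = N (a • (x + s • y) + b • (x + u • y)) := by rw [key]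
    _ ≤ N (a • (x + s • y)) + N (b • (x + u • y)) := hN.2.2 _ _
    _ = a * N (x + s • y) + b * N (x + u • y) := by
        rw [nsmul_nonneg hN ha, nsmul_nonneg hN hb]
    _ = a • N (x + s • y) + b • N (x + u • y) := rfl

theorem nabs_sub_le (hN : IsNorm N) (u v : X) : |N u - N v| ≤ N (u - v) := by
  rw [abs_le]
  constructor
  · have h := hN.2.2 u (v - u)
    have h2 : u + (v - u) = v := by abel
    rw [h2] at h
    have h3 : N (v - u) = N (u - v) := by rw [← nneg hN (u - v)]; congr 1; abel
    linarith [h3 ▸ h]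
  · have h := hN.2.2 v (u - v)
    have h2 : v + (u - v) = u := by abel
    rw [h2] at h; linarith

theorem ncontinuous_line (hN : IsNorm N) (x y : X) :
    Continuous (fun t : ℝ => N (x + t • y)) := by
  rw [Metric.continuous_iff]
  intro t ε hε
  have key : ∀ s : ℝ, |N (x + s • y) - N (x + t • y)| ≤ |s - t| * N y := by
    intro s
    have h := nabs_sub_le hN (x + s • y) (x + t • y)
    have h2 : (x + s • y) - (x + t • y) = (s - t) • y := by
      rw [sub_smul]; abel
    rw [h2, hN.2.1] at h
    exact h
  refine ⟨ε / (N y + 1), div_pos hε (by linarith [nnonneg hN y]), fun s hs => ?_⟩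
  rw [Real.dist_eq] at hs ⊢
  calc |N (x + s • y) - N (x + t • y)| ≤ |s - t| * N y := key s
    _ ≤ |s - t| * (N y + 1) := by
        apply mul_le_mul_of_nonneg_left (by linarith) (abs_nonneg _)
    _ < (ε / (N y + 1)) * (N y + 1) := by
        apply mul_lt_mul_of_pos_right hs (by linarith [nnonneg hN y])
    _ = ε := by
        have h1 : N y + 1 ≠ 0 := by linarith [nnonneg hN y]
        field_simp

/-- slope function of the line `h ↦ N (z + h • y)` through `0`. -/
noncomputable def nsl (N : X → ℝ) (z y : X) : ℝ → ℝ :=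
  fun h => (N (z + h • y) - N z) / h

theorem nsl_eq (hN : IsNorm N) (z y : X) (h : ℝ) :
    nsl N z y h = ((fun t : ℝ => N (z + t • y)) h - (fun t : ℝ => N (z + t • y)) 0) / (h - 0) := by
  simp [nsl]

theorem nsl_mono (hN : IsNorm N) (z y : X) {s t : ℝ} (hs : s ≠ 0) (ht : t ≠ 0)
    (hst : s ≤ t) : nsl N z y s ≤ nsl N z y t := by
  rw [nsl_eq hN, nsl_eq hN]
  exact (nconvexOn hN z y).secant_mono (mem_univ 0) (mem_univ s) (mem_univ t) hs ht hst

/-- The right derivative of `h ↦ N (z + h • y)` at `0`. -/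
noncomputable def Dp (N : X → ℝ) (z y : X) : ℝ := sInf (nsl N z y '' Ioi 0)

/-- The left derivative of `h ↦ N (z + h • y)` at `0`. -/
noncomputable def Dm (N : X → ℝ) (z y : X) : ℝ := sSup (nsl N z y '' Iio 0)

theorem tendsto_Dp (hN : IsNorm N) (z y : X) :
    Tendsto (nsl N z y) (𝓝[>] 0) (𝓝 (Dp N z y)) := by
  apply MonotoneOn.tendsto_nhdsGT
  · intro s hs t ht hst
    exact nsl_mono hN z y (ne_of_gt hs) (ne_of_gt ht) hst
  · refine ⟨nsl N z y (-1), ?_⟩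
    rintro v ⟨h, hh, rfl⟩
    exact nsl_mono hN z y (by norm_num) (ne_of_gt hh) (by linarith [mem_Ioi.1 hh])

theorem tendsto_Dm (hN : IsNorm N) (z y : X) :
    Tendsto (nsl N z y) (𝓝[<] 0) (𝓝 (Dm N z y)) := by
  apply MonotoneOn.tendsto_nhdsLT
  · intro s hs t ht hst
    exact nsl_mono hN z y (ne_of_lt hs) (ne_of_lt ht) hst
  · refine ⟨nsl N z y 1, ?_⟩
    rintro v ⟨h, hh, rfl⟩
    exact nsl_mono hN z y (ne_of_lt hh) (by norm_num) (by linarith [mem_Iio.1 hh])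

theorem Dm_le_Dp (hN : IsNorm N) (z y : X) : Dm N z y ≤ Dp N z y := by
  apply csSup_le (by exact ⟨nsl N z y (-1), ⟨-1, by norm_num, rfl⟩⟩)
  rintro v ⟨s, hs, rfl⟩
  apply le_csInf (by exact ⟨nsl N z y 1, ⟨1, by norm_num, rfl⟩⟩)
  rintro w ⟨t, ht, rfl⟩
  exact nsl_mono hN z y (ne_of_lt hs) (ne_of_gt ht) (le_of_lt (lt_trans hs ht))

theorem tendsto_avg (hN : IsNorm N) (z y : X) (l : Filter ℝ) (hl : l ≤ 𝓝 0) :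
    Tendsto (fun t : ℝ => (N (z + t • y) + N z) / 2) l (𝓝 (N z)) := by
  have h0 : (N (z + (0:ℝ) • y) + N z) / 2 = N z := by
    rw [zero_smul, add_zero]; ring
  have hc : Continuous (fun t : ℝ => (N (z + t • y) + N z) / 2) := by
    exact ((ncontinuous_line hN z y).add continuous_const).div_const 2
  have := (hc.tendsto 0).mono_left hl
  rwa [h0] at this

theorem tendsto_rhoP_quot (hN : IsNorm N) (z y : X) :
    Tendsto (fun t : ℝ => (N (z + t • y) ^ 2 - N z ^ 2) / (2 * t)) (𝓝[>] 0)
      (𝓝 (Dp N z y * N z)) := by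
  have key := (tendsto_Dp hN z y).mul (tendsto_avg hN z y (𝓝[>] 0) nhdsWithin_le_nhds)
  apply key.congr'
  filter_upwards [self_mem_nhdsWithin] with t ht
  have ht' : (t : ℝ) ≠ 0 := ne_of_gt (mem_Ioi.1 ht)
  simp only [nsl]
  field_simp
  ring

theorem tendsto_rhoM_quot (hN : IsNorm N) (z y : X) :
    Tendsto (fun t : ℝ => (N (z + t • y) ^ 2 - N z ^ 2) / (2 * t)) (𝓝[<] 0)
      (𝓝 (Dm N z y * N z)) := by
  have key := (tendsto_Dm hN z y).mul (tendsto_avg hN z y (𝓝[<] 0) nhdsWithin_le_nhds)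
  apply key.congr'
  filter_upwards [self_mem_nhdsWithin] with t ht
  have ht' : (t : ℝ) ≠ 0 := ne_of_lt (mem_Iio.1 ht)
  simp only [nsl]
  field_simp
  ring

theorem rhoPlus_eq (hN : IsNorm N) (z y : X) : rhoPlusN N z y = Dp N z y * N z :=
  (tendsto_rhoP_quot hN z y).limUnder_eq

theorem rhoMinus_eq (hN : IsNorm N) (z y : X) : rhoMinusN N z y = Dm N z y * N z :=
  (tendsto_rhoM_quot hN z y).limUnder_eq

theorem rhoStar_eq (hN : IsNorm N) (z y : X) :
    rhoStarN N z y = Dm N z y * Dp N z y * N z ^ 2 := by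
  rw [rhoStarN, rhoPlus_eq hN, rhoMinus_eq hN]; ring

theorem Dp_self (hN : IsNorm N) (x : X) : Dp N x x = N x := by
  refine tendsto_nhds_unique (tendsto_Dp hN x x) ?_
  apply tendsto_const_nhds.congr'
  filter_upwards [Ioo_mem_nhdsGT_of_mem (Set.left_mem_Ico.2 one_pos)] with h hh
  have h1 : (0:ℝ) ≤ 1 + h := by linarith [hh.1.le]
  have h2 : x + h • x = (1 + h) • x := by rw [add_smul, one_smul]
  rw [nsl, h2, nsmul_nonneg hN h1]
  field_simp [ne_of_gt hh.1]
  ring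

theorem Dm_self (hN : IsNorm N) (x : X) : Dm N x x = N x := by
  refine tendsto_nhds_unique (tendsto_Dm hN x x) ?_
  apply tendsto_const_nhds.congr'
  filter_upwards [Ioo_mem_nhdsLT_of_mem (Set.right_mem_Ioc.2 (by norm_num : (-1:ℝ) < 0))] with h hh
  have h1 : (0:ℝ) ≤ 1 + h := by linarith [hh.1]
  have h2 : x + h • x = (1 + h) • x := by rw [add_smul, one_smul]
  rw [nsl, h2, nsmul_nonneg hN h1]
  have h3 : h ≠ 0 := ne_of_lt hh.2
  field_simp
  ring

-- the key algebraic identity for the translation argument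
theorem nsl_shift_eq (hN : IsNorm N) (z y : X) (c : ℝ) {h : ℝ} (hh : h ≠ 0)
    (hP : 0 < 1 + h * c) :
    nsl N z (y + c • z) h = nsl N z y (h / (1 + h * c)) + c * N z := by
  have hvec : z + h • (y + c • z) = (1 + h * c) • (z + (h / (1 + h * c)) • y) := by
    have hP' : (1 : ℝ) + h * c ≠ 0 := ne_of_gt hP
    match_scalars
    · field_simp
    · field_simp
  rw [nsl, nsl, hvec, nsmul_nonneg hN hP.le]
  have hP' : (1 : ℝ) + h * c ≠ 0 := ne_of_gt hP
  field_simp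
  ring

theorem tendsto_u (c : ℝ) :
    Tendsto (fun h : ℝ => h / (1 + h * c)) (𝓝 0) (𝓝 0) := by
  have : ContinuousAt (fun h : ℝ => h / (1 + h * c)) 0 := by
    apply ContinuousAt.div continuousAt_id (by fun_prop)
    norm_num
  simpa using this.tendsto

theorem eventually_P_pos (c : ℝ) (l : Filter ℝ) (hl : l ≤ 𝓝 0) :
    ∀ᶠ h : ℝ in l, 0 < 1 + h * c := by
  have h1 : ∀ᶠ h : ℝ in 𝓝 (0:ℝ), 0 < 1 + h * c := by
    have : Continuous fun h : ℝ => 1 + h * c := by fun_prop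
    have h0 : (0:ℝ) < 1 + 0 * c := by norm_num
    exact (this.tendsto 0).eventually (eventually_gt_nhds h0)
  exact hl h1

theorem Dp_shift (hN : IsNorm N) (z y : X) (c : ℝ) :
    Dp N z (y + c • z) = Dp N z y + c * N z := by
  refine tendsto_nhds_unique (tendsto_Dp hN z (y + c • z)) ?_
  have hu : Tendsto (fun h : ℝ => h / (1 + h * c)) (𝓝[>] 0) (𝓝[>] 0) := by
    rw [tendsto_nhdsWithin_iff]
    constructor
    · exact (tendsto_u c).mono_left nhdsWithin_le_nhds
    · filter_upwards [eventually_P_pos c _ nhdsWithin_le_nhds, self_mem_nhdsWithin] with h hP hh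
      exact div_pos (mem_Ioi.1 hh) hP
  have hcomp := ((tendsto_Dp hN z y).comp hu).add_const (c * N z)
  apply hcomp.congr'
  filter_upwards [eventually_P_pos c _ nhdsWithin_le_nhds, self_mem_nhdsWithin] with h hP hh
  exact (nsl_shift_eq hN z y c (ne_of_gt (mem_Ioi.1 hh)) hP).symm

theorem Dm_shift (hN : IsNorm N) (z y : X) (c : ℝ) :
    Dm N z (y + c • z) = Dm N z y + c * N z := by
  refine tendsto_nhds_unique (tendsto_Dm hN z (y + c • z)) ?_
  have hu : Tendsto (fun h : ℝ => h / (1 + h * c)) (𝓝[<] 0) (𝓝[<] 0) := by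
    rw [tendsto_nhdsWithin_iff]
    constructor
    · exact (tendsto_u c).mono_left nhdsWithin_le_nhds
    · filter_upwards [eventually_P_pos c _ nhdsWithin_le_nhds, self_mem_nhdsWithin] with h hP hh
      exact div_neg_of_neg_of_pos (mem_Iio.1 hh) hP
  have hcomp := ((tendsto_Dm hN z y).comp hu).add_const (c * N z)
  apply hcomp.congr'
  filter_upwards [eventually_P_pos c _ nhdsWithin_le_nhds, self_mem_nhdsWithin] with h hP hh
  exact (nsl_shift_eq hN z y c (ne_of_lt (mem_Iio.1 hh)) hP).symm

theorem hasDerivWithinAt_Ici (hN : IsNorm N) (x y : X) (t : ℝ) :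
    HasDerivWithinAt (fun s : ℝ => N (x + s • y)) (Dp N (x + t • y) y) (Ici t) t := by
  rw [hasDerivWithinAt_iff_tendsto_slope, Set.Ici_sdiff_left]
  have hmap : Tendsto (fun s : ℝ => s - t) (𝓝[>] t) (𝓝[>] 0) := by
    rw [tendsto_nhdsWithin_iff]
    constructor
    · have : Tendsto (fun s : ℝ => s - t) (𝓝 t) (𝓝 (t - t)) := (continuous_id.sub continuous_const).tendsto t
      rw [sub_self] at this
      exact this.mono_left nhdsWithin_le_nhds
    · filter_upwards [self_mem_nhdsWithin] with s hs
      exact sub_pos.2 (mem_Ioi.1 hs)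
  have := (tendsto_Dp hN (x + t • y) y).comp hmap
  apply this.congr
  intro s
  simp only [Function.comp, nsl, slope_def_field]
  congr 2
  rw [sub_smul]; abel

theorem hasDerivWithinAt_Iic (hN : IsNorm N) (x y : X) (t : ℝ) :
    HasDerivWithinAt (fun s : ℝ => N (x + s • y)) (Dm N (x + t • y) y) (Iic t) t := by
  rw [hasDerivWithinAt_iff_tendsto_slope, Set.Iic_diff_right]
  have hmap : Tendsto (fun s : ℝ => s - t) (𝓝[<] t) (𝓝[<] 0) := by
    rw [tendsto_nhdsWithin_iff]
    constructor
    · have : Tendsto (fun s : ℝ => s - t) (𝓝 t) (𝓝 (t - t)) := (continuous_id.sub continuous_const).tendsto t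
      rw [sub_self] at this
      exact this.mono_left nhdsWithin_le_nhds
    · filter_upwards [self_mem_nhdsWithin] with s hs
      exact sub_neg.2 (mem_Iio.1 hs)
  have := (tendsto_Dm hN (x + t • y) y).comp hmap
  apply this.congr
  intro s
  simp only [Function.comp, nsl, slope_def_field]
  congr 2
  rw [sub_smul]; abel

theorem mono_of_right_deriv_nonneg {f f' : ℝ → ℝ} (hc : Continuous f)
    (hd : ∀ t, HasDerivWithinAt f (f' t) (Ici t) t) (h0 : ∀ t, 0 ≤ f' t) :
    Monotone f := by
  intro a b hab
  have key := image_le_of_deriv_right_le_deriv_boundary (f := fun t => -f t)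
    (f' := fun t => -f' t) (a := a) (b := b)
    (hc.neg.continuousOn) (fun x _ => (hd x).neg) (le_refl (-f a))
    (B := fun _ => -f a) (B' := fun _ => 0) continuousOn_const
    (fun x _ => hasDerivWithinAt_const x _ _)
    (fun x _ => by simpa using h0 x)
  have := key (right_mem_Icc.2 hab)
  simpa using this

theorem anti_of_left_deriv_nonpos {f g : ℝ → ℝ} (hc : Continuous f)
    (hd : ∀ t, HasDerivWithinAt f (g t) (Iic t) t) (h0 : ∀ t, g t ≤ 0) :
    Antitone f := by
  have key : Monotone fun t => f (-t) := by
    apply mono_of_right_deriv_nonneg (f' := fun t => -g (-t))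
      (hc.comp continuous_neg)
    · intro t
      have hneg : HasDerivWithinAt (fun s : ℝ => -s) (-1 : ℝ) (Ici t) t :=
        (hasDerivAt_neg t).hasDerivWithinAt
    
      have hmaps : MapsTo (fun s : ℝ => -s) (Ici t) (Iic (-t)) := fun s hs => by
        simpa using neg_le_neg (mem_Ici.1 hs)
      have := HasDerivWithinAt.comp t (hd (-t)) hneg hmaps
      simpa [mul_comm] using this
    · intro t
      simpa using h0 (-t)
  intro a b hab
  have := key (neg_le_neg hab)
  simpa using this

theorem const_of_onesided {f p m : ℝ → ℝ} (hc : Continuous f)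
    (hp : ∀ t, HasDerivWithinAt f (p t) (Ici t) t) (hp0 : ∀ t, 0 ≤ p t)
    (hm : ∀ t, HasDerivWithinAt f (m t) (Iic t) t) (hm0 : ∀ t, m t ≤ 0)
    (a b : ℝ) : f a = f b := by
  rcases le_total a b with h | h
  · exact le_antisymm (mono_of_right_deriv_nonneg hc hp hp0 h)
      (anti_of_left_deriv_nonpos hc hm hm0 h)
  · exact le_antisymm (anti_of_left_deriv_nonpos hc hm hm0 h)
      (mono_of_right_deriv_nonneg hc hp hp0 h)

theorem sandwich (h₁ : IsNorm N₁) (h₂ : IsNorm N₂)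
    (hz : ∀ x y : X, x ≠ 0 → rhoStarN N₁ x y = 0 → rhoStarN N₂ x y = 0)
    {x : X} (hx : x ≠ 0) (y : X) :
    Dp N₁ x y / N₁ x ≤ Dp N₂ x y / N₂ x ∧ Dm N₂ x y / N₂ x ≤ Dm N₁ x y / N₁ x := by
  have h1p := npos h₁ hx
  have h2p := npos h₂ hx
  have main : ∀ c : ℝ, (Dm N₁ x y + c * N₁ x) * (Dp N₁ x y + c * N₁ x) = 0 →
      Dm N₂ x y + c * N₂ x = 0 ∨ Dp N₂ x y + c * N₂ x = 0 := by
    intro c h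
    have hz1 : rhoStarN N₁ x (y + c • x) = 0 := by
      rw [rhoStar_eq h₁, Dm_shift h₁, Dp_shift h₁, h, zero_mul]
    have hz2 := hz x (y + c • x) hx hz1
    rw [rhoStar_eq h₂, Dm_shift h₂, Dp_shift h₂] at hz2
    rcases mul_eq_zero.1 hz2 with h' | h'
    · exact mul_eq_zero.1 h'
    · exact absurd h' (pow_ne_zero 2 (ne_of_gt h2p))
  have hmle := Dm_le_Dp h₂ x y
  have h1ne : N₁ x ≠ 0 := ne_of_gt h1p
  have h2ne : N₂ x ≠ 0 := ne_of_gt h2p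
  constructor
  · set c := -(Dp N₁ x y / N₁ x) with hc_def
    have hc : Dp N₁ x y + c * N₁ x = 0 := by rw [hc_def]; field_simp; ring
    rcases main c (by rw [hc, mul_zero]) with h | h
    · have heq : Dm N₂ x y / N₂ x = Dp N₁ x y / N₁ x := by
        have h' : Dm N₂ x y = -c * N₂ x := by linarith
        rw [h', hc_def]; field_simp; try ring
      rw [← heq]; gcongr
    · have heq : Dp N₂ x y / N₂ x = Dp N₁ x y / N₁ x := by
        have h' : Dp N₂ x y = -c * N₂ x := by linarith
        rw [h', hc_def]; field_simp; try ring
      rw [heq]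
  · set c := -(Dm N₁ x y / N₁ x) with hc_def
    have hc : Dm N₁ x y + c * N₁ x = 0 := by rw [hc_def]; field_simp; ring
    rcases main c (by rw [hc, zero_mul]) with h | h
    · have heq : Dm N₂ x y / N₂ x = Dm N₁ x y / N₁ x := by
        have h' : Dm N₂ x y = -c * N₂ x := by linarith
        rw [h', hc_def]; field_simp; try ring
      rw [heq]
    · have heq : Dp N₂ x y / N₂ x = Dm N₁ x y / N₁ x := by
        have h' : Dp N₂ x y = -c * N₂ x := by linarith
        rw [h', hc_def]; field_simp; try ring
      rw [← heq]; gcongr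
theorem ratio_const_line (h₁ : IsNorm N₁) (h₂ : IsNorm N₂)
    (hz : ∀ x y : X, x ≠ 0 → rhoStarN N₁ x y = 0 → rhoStarN N₂ x y = 0)
    {x y : X} (hline : ∀ t : ℝ, x + t • y ≠ 0) (t : ℝ) :
    N₂ (x + t • y) / N₁ (x + t • y) = N₂ x / N₁ x := by
  have h1p : ∀ s : ℝ, 0 < N₁ (x + s • y) := fun s => npos h₁ (hline s)
  have h2p : ∀ s : ℝ, 0 < N₂ (x + s • y) := fun s => npos h₂ (hline s)
  have hc : Continuous (fun s : ℝ => N₂ (x + s • y) / N₁ (x + s • y)) :=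
    (ncontinuous_line h₂ x y).div (ncontinuous_line h₁ x y) (fun s => ne_of_gt (h1p s))
  have key := const_of_onesided
    (p := fun s => (Dp N₂ (x + s • y) y * N₁ (x + s • y) -
      N₂ (x + s • y) * Dp N₁ (x + s • y) y) / N₁ (x + s • y) ^ 2)
    (m := fun s => (Dm N₂ (x + s • y) y * N₁ (x + s • y) -
      N₂ (x + s • y) * Dm N₁ (x + s • y) y) / N₁ (x + s • y) ^ 2)
    hc
    (fun s => (hasDerivWithinAt_Ici h₂ x y s).div (hasDerivWithinAt_Ici h₁ x y s)
      (ne_of_gt (h1p s)))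
    (fun s => by
      have hs := (sandwich h₁ h₂ hz (hline s) y).1
      rw [div_le_div_iff₀ (h1p s) (h2p s)] at hs
      apply div_nonneg _ (sq_nonneg _)
      linarith [mul_comm (N₂ (x + s • y)) (Dp N₁ (x + s • y) y)])
    (fun s => (hasDerivWithinAt_Iic h₂ x y s).div (hasDerivWithinAt_Iic h₁ x y s)
      (ne_of_gt (h1p s)))
    (fun s => by
      have hs := (sandwich h₁ h₂ hz (hline s) y).2
      rw [div_le_div_iff₀ (h2p s) (h1p s)] at hs
      apply div_nonpos_of_nonpos_of_nonneg _ (sq_nonneg _)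
      linarith [mul_comm (N₂ (x + s • y)) (Dm N₁ (x + s • y) y)])
    t 0
  have h0 : x + (0 : ℝ) • y = x := by rw [zero_smul, add_zero]
  rw [h0] at key
  exact key

theorem prop_of_zeros (hdim : 2 ≤ Module.rank ℝ X) (h₁ : IsNorm N₁) (h₂ : IsNorm N₂)
    (hz : ∀ x y : X, x ≠ 0 → rhoStarN N₁ x y = 0 → rhoStarN N₂ x y = 0) :
    ∃ M : ℝ, 0 < M ∧ ∀ x : X, N₂ x = M * N₁ x := by
  have hrank : 1 < Module.rank ℝ X := lt_of_lt_of_le (by norm_num) hdim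
  have hnt : Nontrivial X := by
    rw [← rank_pos_iff_nontrivial (R := ℝ)]
    exact lt_trans zero_lt_one hrank
  obtain ⟨e, he⟩ := exists_ne (0 : X)
  have pair : ∀ u v : X, LinearIndependent ℝ ![u, v] → N₂ u / N₁ u = N₂ v / N₁ v := by
    intro u v huv
    have hline : ∀ t : ℝ, u + t • (v - u) ≠ 0 := by
      intro t hzero
      have hcomb : (1 - t) • u + t • v = 0 := by
        rw [sub_smul, one_smul]
        rw [smul_sub] at hzero
        calc u - t • u + t • v = u + (t • v - t • u) := by abel
          _ = 0 := hzero
      obtain ⟨hh1, hh2⟩ := LinearIndependent.pair_iff.1 huv (1 - t) t hcomb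
      rw [hh2, sub_zero] at hh1
      exact one_ne_zero hh1
    have key := ratio_const_line h₁ h₂ hz hline 1
    have h1 : u + (1 : ℝ) • (v - u) = v := by rw [one_smul]; abel
    rw [h1] at key
    exact key.symm
  have ratio : ∀ z : X, z ≠ 0 → N₂ z / N₁ z = N₂ e / N₁ e := by
    intro z hzne
    by_cases hind : LinearIndependent ℝ ![z, e]
    · exact pair z e hind
    · obtain ⟨u, hu⟩ := exists_linearIndependent_pair_of_one_lt_rank hrank hzne
      have hdep : ∃ c : ℝ, c ≠ 0 ∧ e = c • z := by
        rw [LinearIndependent.pair_iff] at hind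
        push_neg at hind
        obtain ⟨s, t, hst, hne⟩ := hind
        have ht : t ≠ 0 := by
          intro h0
          rw [h0, zero_smul, add_zero] at hst
          rcases smul_eq_zero.1 hst with h | h
          · exact hne h h0
          · exact hzne h
        refine ⟨-s / t, ?_, ?_⟩
        · intro h0
          have hs : s = 0 := by
            field_simp at h0
            simpa using h0
          rw [hs, zero_smul, zero_add] at hst
          rcases smul_eq_zero.1 hst with h | h
          · exact ht h
          · exact he h
        · have : t • e = -s • z := by
            rw [neg_smul]
            rw [eq_neg_iff_add_eq_zero]
            rw [add_comm]
            exact hst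
          have := congrArg (fun w => t⁻¹ • w) this
          simp only [smul_smul, inv_mul_cancel₀ ht, one_smul] at this
          rw [this]
          congr 1
          rw [div_eq_inv_mul]
      obtain ⟨c, hc0, hce⟩ := hdep
      have hu2 : LinearIndependent ℝ ![e, u] := by
        rw [hce]
        rw [LinearIndependent.pair_iff] at hu ⊢
        intro s t hst
        rw [smul_smul] at hst
        obtain ⟨h1, h2⟩ := hu (s * c) t hst
        exact ⟨by rcases mul_eq_zero.1 h1 with h | h; exact h; exact absurd h hc0, h2⟩
      calc N₂ z / N₁ z = N₂ u / N₁ u := pair z u hu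
        _ = N₂ e / N₁ e := by rw [pair e u hu2]
  refine ⟨N₂ e / N₁ e, div_pos (npos h₂ he) (npos h₁ he), fun x => ?_⟩
  rcases eq_or_ne x 0 with rfl | hx
  · rw [nzero h₁, nzero h₂, mul_zero]
  · have h := ratio x hx
    rw [div_eq_div_iff (ne_of_gt (npos h₁ hx)) (ne_of_gt (npos h₁ he))] at h
    rw [div_mul_eq_mul_div, eq_div_iff (ne_of_gt (npos h₁ he))]
    exact h

theorem rhoPlus_scale (h₁ : IsNorm N₁) {M : ℝ} (hM : ∀ v : X, N₂ v = M * N₁ v) (x y : X) :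
    rhoPlusN N₂ x y = M ^ 2 * rhoPlusN N₁ x y := by
  have hfun : (fun t : ℝ => (N₂ (x + t • y) ^ 2 - N₂ x ^ 2) / (2 * t))
      = fun t : ℝ => M ^ 2 * ((N₁ (x + t • y) ^ 2 - N₁ x ^ 2) / (2 * t)) := by
    funext t; rw [hM, hM]; ring
  have htd : Tendsto (fun t : ℝ => M ^ 2 * ((N₁ (x + t • y) ^ 2 - N₁ x ^ 2) / (2 * t))) (𝓝[>] 0)
      (𝓝 (M ^ 2 * (Dp N₁ x y * N₁ x))) := (tendsto_rhoP_quot h₁ x y).const_mul (M ^ 2)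
  rw [rhoPlusN, hfun, htd.limUnder_eq, rhoPlus_eq h₁ x y]

theorem rhoMinus_scale (h₁ : IsNorm N₁) {M : ℝ} (hM : ∀ v : X, N₂ v = M * N₁ v) (x y : X) :
    rhoMinusN N₂ x y = M ^ 2 * rhoMinusN N₁ x y := by
  have hfun : (fun t : ℝ => (N₂ (x + t • y) ^ 2 - N₂ x ^ 2) / (2 * t))
      = fun t : ℝ => M ^ 2 * ((N₁ (x + t • y) ^ 2 - N₁ x ^ 2) / (2 * t)) := by
    funext t; rw [hM, hM]; ring
  have htd : Tendsto (fun t : ℝ => M ^ 2 * ((N₁ (x + t • y) ^ 2 - N₁ x ^ 2) / (2 * t))) (𝓝[<] 0)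
      (𝓝 (M ^ 2 * (Dm N₁ x y * N₁ x))) := (tendsto_rhoM_quot h₁ x y).const_mul (M ^ 2)
  rw [rhoMinusN, hfun, htd.limUnder_eq, rhoMinus_eq h₁ x y]

theorem rhoStar_scale (h₁ : IsNorm N₁) {M : ℝ} (hM : ∀ v : X, N₂ v = M * N₁ v) (x y : X) :
    rhoStarN N₂ x y = M ^ 4 * rhoStarN N₁ x y := by
  rw [rhoStarN, rhoStarN, rhoPlus_scale h₁ hM, rhoMinus_scale h₁ hM]; ring

theorem rhoStar_self (hN : IsNorm N) (x : X) : rhoStarN N x x = N x ^ 4 := by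
  rw [rhoStar_eq hN, Dp_self hN, Dm_self hN]; ring

theorem pow4_eq {a b : ℝ} (ha : 0 ≤ a) (hb : 0 ≤ b) (h : a ^ 4 = b ^ 4) : a = b := by
  rcases lt_trichotomy a b with hl | he | hl
  · have := pow_lt_pow_left₀ hl ha (n := 4) (by norm_num)
    linarith
  · exact he
  · have := pow_lt_pow_left₀ hl hb (n := 4) (by norm_num)
    linarith

theorem eighth_of_pow (h₁ : IsNorm N₁) (h₂ : IsNorm N₂) {M : ℝ} (hM : 0 < M)
    (h : ∀ x : X, N₂ x ^ 4 = M * N₁ x ^ 4) :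
    ∃ K : ℝ, 0 < K ∧ ∀ x : X, N₂ x = K * N₁ x := by
  refine ⟨M ^ ((1:ℝ)/4), Real.rpow_pos_of_pos hM _, fun x => ?_⟩
  apply pow4_eq (nnonneg h₂ x) (mul_nonneg (Real.rpow_pos_of_pos hM _).le (nnonneg h₁ x))
  rw [h x, mul_pow]
  congr 1
  rw [← Real.rpow_natCast (M ^ ((1:ℝ)/4)) 4, ← Real.rpow_mul hM.le]
  norm_num

end RhoAux

theorem rhoStar_two_norms_tfae {X : Type*} [AddCommGroup X] [Module ℝ X]
    (hdim : 2 ≤ Module.rank ℝ X) (N₁ N₂ : X → ℝ) (h₁ : IsNorm N₁) (h₂ : IsNorm N₂) :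
    List.TFAE
      [ ∀ x y : X, x ≠ 0 →
          rhoStarN N₁ x y / N₁ x ^ 4 = rhoStarN N₂ x y / N₂ x ^ 4,
        ∃ m M : ℝ, 0 < m ∧ 0 < M ∧ ∀ x y : X,
          m * |rhoStarN N₁ x y| ≤ |rhoStarN N₂ x y| ∧
          |rhoStarN N₂ x y| ≤ M * |rhoStarN N₁ x y|,
        ∃ M : ℝ, 0 < M ∧ ∀ x y : X, |rhoStarN N₂ x y| ≤ M * |rhoStarN N₁ x y|,
        ∃ m : ℝ, 0 < m ∧ ∀ x y : X, m * |rhoStarN N₁ x y| ≤ |rhoStarN N₂ x y|,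
        ∃ m M : ℝ, ∀ x y : X,
          m * rhoStarN N₁ x y ≤ rhoStarN N₂ x y ∧
          rhoStarN N₂ x y ≤ M * rhoStarN N₁ x y,
        ∃ M : ℝ, 0 < M ∧ ∀ x y : X, |rhoStarN N₂ x y| = M * |rhoStarN N₁ x y|,
        ∃ M : ℝ, 0 < M ∧ ∀ x y : X, rhoStarN N₂ x y = M * rhoStarN N₁ x y,
        ∃ M : ℝ, 0 < M ∧ ∀ x : X, N₂ x = M * N₁ x ] := by
  tfae_have 8 → 7 := by
    rintro ⟨M, hM, h⟩
    exact ⟨M ^ 4, by positivity, fun x y => RhoAux.rhoStar_scale h₁ h x y⟩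
  tfae_have 7 → 6 := by
    rintro ⟨M, hM, h⟩
    exact ⟨M, hM, fun x y => by rw [h x y, abs_mul, abs_of_pos hM]⟩
  tfae_have 6 → 8 := by
    rintro ⟨M, hM, h⟩
    apply RhoAux.eighth_of_pow h₁ h₂ hM
    intro x
    have hx := h x x
    rw [RhoAux.rhoStar_self h₁, RhoAux.rhoStar_self h₂,
      abs_of_nonneg (pow_nonneg (RhoAux.nnonneg h₂ x) 4),
      abs_of_nonneg (pow_nonneg (RhoAux.nnonneg h₁ x) 4)] at hx
    exact hx
  tfae_have 8 → 2 := by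
    rintro ⟨M, hM, h⟩
    refine ⟨M ^ 4, M ^ 4, by positivity, by positivity, fun x y => ?_⟩
    rw [RhoAux.rhoStar_scale h₁ h x y, abs_mul, abs_of_pos (by positivity : (0:ℝ) < M ^ 4)]
    exact ⟨le_refl _, le_refl _⟩
  tfae_have 2 → 3 := by
    rintro ⟨m, M, hm, hM, h⟩
    exact ⟨M, hM, fun x y => (h x y).2⟩
  tfae_have 2 → 4 := by
    rintro ⟨m, M, hm, hM, h⟩
    exact ⟨m, hm, fun x y => (h x y).1⟩
  tfae_have 3 → 8 := by
    rintro ⟨M, hM, h⟩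
    apply RhoAux.prop_of_zeros hdim h₁ h₂
    intro x y hx h0
    have hxy := h x y
    rw [h0, abs_zero, mul_zero] at hxy
    exact abs_eq_zero.1 (le_antisymm hxy (abs_nonneg _))
  tfae_have 4 → 8 := by
    rintro ⟨m, hm, h⟩
    have hz : ∀ x y : X, x ≠ 0 → rhoStarN N₂ x y = 0 → rhoStarN N₁ x y = 0 := by
      intro x y hx h0
      have hxy := h x y
      rw [h0, abs_zero] at hxy
      have habs : |rhoStarN N₁ x y| = 0 := by
        nlinarith [abs_nonneg (rhoStarN N₁ x y)]
      exact abs_eq_zero.1 habs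
    obtain ⟨M, hM, hprop⟩ := RhoAux.prop_of_zeros hdim h₂ h₁ hz
    refine ⟨M⁻¹, inv_pos.2 hM, fun x => ?_⟩
    rw [hprop x]
    field_simp
  tfae_have 8 → 5 := by
    rintro ⟨M, hM, h⟩
    refine ⟨M ^ 4, M ^ 4, fun x y => ?_⟩
    rw [RhoAux.rhoStar_scale h₁ h x y]
    exact ⟨le_refl _, le_refl _⟩
  tfae_have 5 → 8 := by
    rintro ⟨m, M, h⟩
    apply RhoAux.prop_of_zeros hdim h₁ h₂
    intro x y hx h0
    obtain ⟨hl, hr⟩ := h x y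
    rw [h0, mul_zero] at hl hr
    linarith
  tfae_have 8 → 1 := by
    rintro ⟨M, hM, h⟩
    intro x y hx
    rw [RhoAux.rhoStar_scale h₁ h x y, h x, mul_pow,
      mul_div_mul_left _ _ (ne_of_gt (by positivity : (0:ℝ) < M ^ 4))]
  tfae_have 1 → 8 := by
    intro h
    apply RhoAux.prop_of_zeros hdim h₁ h₂
    intro x y hx h0
    have hxy := h x y hx
    rw [h0, zero_div] at hxy
    rcases div_eq_zero_iff.1 hxy.symm with h' | h'
    · exact h'
    · exact absurd h' (pow_ne_zero 4 (ne_of_gt (RhoAux.npos h₂ hx)))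
  tfae_finish
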